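/- arXiv:2504.19497 — 4 statements merged into one kernel-verified Lean document; each statement's English description precedes it below -/
import Mathlib

section
/- If G : ℝ^n → ℝ^n is μ-inverse Lipschitz with μ > 0, then the function H(x) = (1/2)|G(x)|² + c (c a constant) satisfies the Polyak-Łojasiewicz inequality (1/2)|∇H(x)|² ≥ μ²(H(x) - min_x H(x)) at every point x where G is differentiable and H attains its minimum. -/
theorem stmt_1 (n : ℕ) (μ c : ℝ) (hμ : 0 < μ)
    (G : EuclideanSpace ℝ (Fin n) → EuclideanSpace ℝ (Fin n))
    (hinv : ∀ xa xb, μ * ‖xa - xb‖ ≤ ‖G xa - G xb‖)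
    (H : EuclideanSpace ℝ (Fin n) → ℝ)
    (hH : H = fun x => (1 / 2 : ℝ) * ‖G x‖ ^ 2 + c)
    (x₀ : EuclideanSpace ℝ (Fin n)) (hmin : ∀ y, H x₀ ≤ H y) :
    ∀ x, DifferentiableAt ℝ G x →
      (1 / 2 : ℝ) * ‖gradient H x‖ ^ 2 ≥ μ ^ 2 * (H x - H x₀) := by
  subst hH
  intro x hG
  set A := fderiv ℝ G x with hA
  have hGA : HasFDerivAt G A x := hG.hasFDerivAt
  -- Step 1: the derivative is bounded below: μ‖v‖ ≤ ‖A v‖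
  have hlow : ∀ v, μ * ‖v‖ ≤ ‖A v‖ := by
    intro v
    have h1 : HasDerivAt (fun t : ℝ => x + t • v) v 0 := by
      simpa using ((hasDerivAt_id (0 : ℝ)).smul_const v).const_add x
    have hGA' : HasFDerivAt G A (x + (0 : ℝ) • v) := by simpa using hGA
    have hline : HasDerivAt (fun t : ℝ => G (x + t • v)) (A v) 0 := by
      exact hGA'.comp_hasDerivAt 0 h1
    have hslope := hasDerivAt_iff_tendsto_slope.mp hline
    have htend : Filter.Tendsto (fun t : ℝ => ‖slope (fun t : ℝ => G (x + t • v)) 0 t‖)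
        (nhdsWithin (0 : ℝ) {(0 : ℝ)}ᶜ) (nhds ‖A v‖) := hslope.norm
    refine ge_of_tendsto htend ?_
    filter_upwards [self_mem_nhdsWithin] with t ht
    have ht' : (t : ℝ) ≠ 0 := ht
    have hs : slope (fun t : ℝ => G (x + t • v)) 0 t
        = (t : ℝ)⁻¹ • (G (x + t • v) - G x) := by
      simp [slope_def_module]
    rw [hs, norm_smul]
    have h2 : μ * ‖(x + t • v) - x‖ ≤ ‖G (x + t • v) - G x‖ := hinv _ _
    have h3 : ‖(x + t • v) - x‖ = |t| * ‖v‖ := by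
      simp [norm_smul, Real.norm_eq_abs]
    rw [h3] at h2
    have habs : (0 : ℝ) < |t| := abs_pos.mpr ht'
    rw [norm_inv, Real.norm_eq_abs]
    have h4 := mul_le_mul_of_nonneg_left h2 (le_of_lt (inv_pos.mpr habs))
    calc μ * ‖v‖ = |t|⁻¹ * (μ * (|t| * ‖v‖)) := by field_simp
      _ ≤ |t|⁻¹ * ‖G (x + t • v) - G x‖ := h4
  -- Step 2: the gradient is (adjoint A) (G x)
  set B := ContinuousLinearMap.adjoint A with hB
  have hinner : HasFDerivAt (fun y => (inner ℝ (G y) (G y) : ℝ))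
      ((fderivInnerCLM ℝ (G x, G x)).comp (A.prod A)) x := hGA.inner ℝ hGA
  have hfd : HasFDerivAt (fun y => (1 / 2 : ℝ) * ‖G y‖ ^ 2 + c)
      (InnerProductSpace.toDual ℝ _ (B (G x))) x := by
    have heq : (fun y => (1 / 2 : ℝ) * ‖G y‖ ^ 2 + c)
        = fun y => (1 / 2 : ℝ) * (inner ℝ (G y) (G y) : ℝ) + c := by
      funext y; rw [real_inner_self_eq_norm_sq]
    rw [heq]
    have h2 := (hinner.const_mul (1 / 2 : ℝ)).add_const c
    refine h2.congr_fderiv ?_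
    ext v
    simp only [InnerProductSpace.toDual_apply_apply, ContinuousLinearMap.coe_comp',
      Function.comp_apply, ContinuousLinearMap.prod_apply, fderivInnerCLM_apply,
      ContinuousLinearMap.coe_smul', Pi.smul_apply, smul_eq_mul]
    rw [hB, ContinuousLinearMap.adjoint_inner_left]
    rw [real_inner_comm (A v) (G x)]
    ring
  have hgrad : gradient (fun y => (1 / 2 : ℝ) * ‖G y‖ ^ 2 + c) x = B (G x) := by
    have : HasGradientAt (fun y => (1 / 2 : ℝ) * ‖G y‖ ^ 2 + c) (B (G x)) x :=
      hasGradientAt_iff_hasFDerivAt.mpr hfd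
    exact this.gradient
  -- Step 3: ‖B (G x)‖ ≥ μ ‖G x‖ using surjectivity of A
  have hsurj : Function.Surjective A := by
    have hinj : Function.Injective A := by
      intro a b hab
      have h0 : A (a - b) = 0 := by rw [map_sub, hab, sub_self]
      have h1 := hlow (a - b)
      rw [h0, norm_zero] at h1
      have h2 : ‖a - b‖ = 0 := le_antisymm (by nlinarith [norm_nonneg (a - b)]) (norm_nonneg _)
      exact sub_eq_zero.mp (norm_eq_zero.mp h2)
    exact (LinearMap.injective_iff_surjective (f := (A : EuclideanSpace ℝ (Fin n) →ₗ[ℝ] EuclideanSpace ℝ (Fin n)))).mp hinj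
  have hkey : μ * ‖G x‖ ≤ ‖B (G x)‖ := by
    obtain ⟨v, hv⟩ := hsurj (G x)
    have h1 : (inner ℝ (B (G x)) v : ℝ) = ‖G x‖ ^ 2 := by
      rw [hB, ContinuousLinearMap.adjoint_inner_left, hv, real_inner_self_eq_norm_sq]
    have h2 : (inner ℝ (B (G x)) v : ℝ) ≤ ‖B (G x)‖ * ‖v‖ := real_inner_le_norm _ _
    have h3 : μ * ‖v‖ ≤ ‖G x‖ := by rw [← hv]; exact hlow v
    rcases eq_or_ne (G x) 0 with h0 | h0
    · simp [h0]
    · have hn : 0 < ‖G x‖ := norm_pos_iff.mpr h0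
      nlinarith [norm_nonneg v, norm_nonneg (B (G x))]
  rw [hgrad]
  nlinarith [norm_nonneg (G x₀), norm_nonneg (G x), sq_nonneg (‖G x₀‖), hμ.le,
    mul_le_mul hkey hkey (by positivity) (norm_nonneg _)]
end

section
/- Let H₁ : ℝ^n → ℝ and H₂ : ℝ^m → ℝ be C¹, C₁ : ℝ^n → ℝ^p, C₂ : ℝ^m → ℝ^p be C¹, and suppose x₁(t), x₂(t) solve ẋ₁ = (J₁(x₁) - R₁(x₁))(∇H₁(x₁) - (DC₁(x₁))ᵀ C₂(x₂)) and ẋ₂ = (J₂(x₂) - R₂(x₂))(∇H₂(x₂) - (DC₂(x₂))ᵀ C₁(x₁)), with J_i skew-symmetric and R_i symmetric positive semidefinite at every point. Then W(x₁,x₂) = H₁(x₁) + H₂(x₂) - C₁(x₁)ᵀC₂(x₂) satisfies d/dt W(x₁(t),x₂(t)) ≤ 0. -/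
theorem stmt_12 (n m p : ℕ)
    (J₁ R₁ : EuclideanSpace ℝ (Fin n) →
      EuclideanSpace ℝ (Fin n) →L[ℝ] EuclideanSpace ℝ (Fin n))
    (J₂ R₂ : EuclideanSpace ℝ (Fin m) →
      EuclideanSpace ℝ (Fin m) →L[ℝ] EuclideanSpace ℝ (Fin m))
    (hJ₁ : ∀ x, ContinuousLinearMap.adjoint (J₁ x) = -(J₁ x))
    (hR₁sym : ∀ x, ContinuousLinearMap.adjoint (R₁ x) = R₁ x)
    (hR₁psd : ∀ x v, 0 ≤ (inner ℝ v (R₁ x v) : ℝ))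
    (hJ₂ : ∀ x, ContinuousLinearMap.adjoint (J₂ x) = -(J₂ x))
    (hR₂sym : ∀ x, ContinuousLinearMap.adjoint (R₂ x) = R₂ x)
    (hR₂psd : ∀ x v, 0 ≤ (inner ℝ v (R₂ x v) : ℝ))
    (H₁ : EuclideanSpace ℝ (Fin n) → ℝ) (hH₁ : ContDiff ℝ 1 H₁)
    (H₂ : EuclideanSpace ℝ (Fin m) → ℝ) (hH₂ : ContDiff ℝ 1 H₂)
    (C₁ : EuclideanSpace ℝ (Fin n) → EuclideanSpace ℝ (Fin p))
    (hC₁ : ContDiff ℝ 1 C₁)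
    (C₂ : EuclideanSpace ℝ (Fin m) → EuclideanSpace ℝ (Fin p))
    (hC₂ : ContDiff ℝ 1 C₂)
    (x₁ : ℝ → EuclideanSpace ℝ (Fin n)) (x₂ : ℝ → EuclideanSpace ℝ (Fin m))
    (hode₁ : ∀ t, HasDerivAt x₁
      ((J₁ (x₁ t) - R₁ (x₁ t))
        (gradient H₁ (x₁ t) -
          ContinuousLinearMap.adjoint (fderiv ℝ C₁ (x₁ t)) (C₂ (x₂ t)))) t)
    (hode₂ : ∀ t, HasDerivAt x₂
      ((J₂ (x₂ t) - R₂ (x₂ t))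
        (gradient H₂ (x₂ t) -
          ContinuousLinearMap.adjoint (fderiv ℝ C₂ (x₂ t)) (C₁ (x₁ t)))) t) :
    ∀ t, deriv (fun s =>
      H₁ (x₁ s) + H₂ (x₂ s) - (inner ℝ (C₁ (x₁ s)) (C₂ (x₂ s)) : ℝ)) t ≤ 0 := by
  intro t
  set v₁ := gradient H₁ (x₁ t) -
    ContinuousLinearMap.adjoint (fderiv ℝ C₁ (x₁ t)) (C₂ (x₂ t)) with hv₁
  set v₂ := gradient H₂ (x₂ t) -
    ContinuousLinearMap.adjoint (fderiv ℝ C₂ (x₂ t)) (C₁ (x₁ t)) with hv₂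
  set u₁ := (J₁ (x₁ t) - R₁ (x₁ t)) v₁ with hu₁
  set u₂ := (J₂ (x₂ t) - R₂ (x₂ t)) v₂ with hu₂
  -- derivative of H₁ ∘ x₁
  have hg₁ : HasGradientAt H₁ (gradient H₁ (x₁ t)) (x₁ t) :=
    (hH₁.differentiable one_ne_zero (x₁ t)).hasGradientAt
  have hg₂ : HasGradientAt H₂ (gradient H₂ (x₂ t)) (x₂ t) :=
    (hH₂.differentiable one_ne_zero (x₂ t)).hasGradientAt
  have hd₁ : HasDerivAt (fun s => H₁ (x₁ s))
      ((inner ℝ (gradient H₁ (x₁ t)) u₁ : ℝ)) t := by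
    have h := hg₁.hasFDerivAt.comp_hasDerivAt t (hode₁ t)
    simp only [InnerProductSpace.toDual_apply_apply] at h
    exact h
  have hd₂ : HasDerivAt (fun s => H₂ (x₂ s))
      ((inner ℝ (gradient H₂ (x₂ t)) u₂ : ℝ)) t := by
    have h := hg₂.hasFDerivAt.comp_hasDerivAt t (hode₂ t)
    simp only [InnerProductSpace.toDual_apply_apply] at h
    exact h
  have hdc₁ : HasDerivAt (fun s => C₁ (x₁ s)) (fderiv ℝ C₁ (x₁ t) u₁) t :=
    (hC₁.differentiable one_ne_zero (x₁ t)).hasFDerivAt.comp_hasDerivAt t (hode₁ t)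
  have hdc₂ : HasDerivAt (fun s => C₂ (x₂ s)) (fderiv ℝ C₂ (x₂ t) u₂) t :=
    (hC₂.differentiable one_ne_zero (x₂ t)).hasFDerivAt.comp_hasDerivAt t (hode₂ t)
  have hdin : HasDerivAt (fun s => (inner ℝ (C₁ (x₁ s)) (C₂ (x₂ s)) : ℝ))
      ((inner ℝ (C₁ (x₁ t)) (fderiv ℝ C₂ (x₂ t) u₂) : ℝ)
        + (inner ℝ (fderiv ℝ C₁ (x₁ t) u₁) (C₂ (x₂ t)) : ℝ)) t :=
    hdc₁.inner ℝ hdc₂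
  have hW : HasDerivAt (fun s =>
      H₁ (x₁ s) + H₂ (x₂ s) - (inner ℝ (C₁ (x₁ s)) (C₂ (x₂ s)) : ℝ))
      ((inner ℝ (gradient H₁ (x₁ t)) u₁ : ℝ) + (inner ℝ (gradient H₂ (x₂ t)) u₂ : ℝ)
        - ((inner ℝ (C₁ (x₁ t)) (fderiv ℝ C₂ (x₂ t) u₂) : ℝ)
          + (inner ℝ (fderiv ℝ C₁ (x₁ t) u₁) (C₂ (x₂ t)) : ℝ))) t :=
    (hd₁.add hd₂).sub hdin
  rw [hW.deriv]
  -- rewrite to ⟪v₁,u₁⟫ + ⟪v₂,u₂⟫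
  have key : (inner ℝ (gradient H₁ (x₁ t)) u₁ : ℝ) + (inner ℝ (gradient H₂ (x₂ t)) u₂ : ℝ)
      - ((inner ℝ (C₁ (x₁ t)) (fderiv ℝ C₂ (x₂ t) u₂) : ℝ)
        + (inner ℝ (fderiv ℝ C₁ (x₁ t) u₁) (C₂ (x₂ t)) : ℝ))
      = (inner ℝ v₁ u₁ : ℝ) + (inner ℝ v₂ u₂ : ℝ) := by
    have e₁ : (inner ℝ (fderiv ℝ C₁ (x₁ t) u₁) (C₂ (x₂ t)) : ℝ)
        = inner ℝ (ContinuousLinearMap.adjoint (fderiv ℝ C₁ (x₁ t)) (C₂ (x₂ t))) u₁ := by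
      rw [ContinuousLinearMap.adjoint_inner_left, real_inner_comm]
    have e₂ : (inner ℝ (C₁ (x₁ t)) (fderiv ℝ C₂ (x₂ t) u₂) : ℝ)
        = inner ℝ (ContinuousLinearMap.adjoint (fderiv ℝ C₂ (x₂ t)) (C₁ (x₁ t))) u₂ := by
      rw [real_inner_comm, ContinuousLinearMap.adjoint_inner_left, real_inner_comm]
    rw [hv₁, hv₂, e₁, e₂, inner_sub_left, inner_sub_left]; ring
  rw [key]
  have skew : ∀ (k : ℕ) (J : EuclideanSpace ℝ (Fin k) →L[ℝ] EuclideanSpace ℝ (Fin k)),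
      ContinuousLinearMap.adjoint J = -J → ∀ v, (inner ℝ v (J v) : ℝ) = 0 := by
    intro k J hJ v
    have h1 : (inner ℝ v (J v) : ℝ) = inner ℝ (ContinuousLinearMap.adjoint J v) v := by
      rw [ContinuousLinearMap.adjoint_inner_left, real_inner_comm]
    rw [hJ] at h1
    simp only [ContinuousLinearMap.neg_apply, inner_neg_left] at h1
    have h2 : (inner ℝ v (J v) : ℝ) = inner ℝ (J v) v := real_inner_comm _ _
    linarith
  have q₁ : (inner ℝ v₁ u₁ : ℝ) = -(inner ℝ v₁ (R₁ (x₁ t) v₁) : ℝ) := by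
    rw [hu₁]
    simp only [ContinuousLinearMap.sub_apply, inner_sub_right]
    rw [skew n (J₁ (x₁ t)) (hJ₁ _) v₁]; ring
  have q₂ : (inner ℝ v₂ u₂ : ℝ) = -(inner ℝ v₂ (R₂ (x₂ t) v₂) : ℝ) := by
    rw [hu₂]
    simp only [ContinuousLinearMap.sub_apply, inner_sub_right]
    rw [skew m (J₂ (x₂ t)) (hJ₂ _) v₂]; ring
  rw [q₁, q₂]
  have := hR₁psd (x₁ t) v₁
  have := hR₂psd (x₂ t) v₂
  linarith
end

section
/- Let V(q) ≥ (η/2)|q|² for all q ∈ ℝ^n with V(0)=0, let M(q) be symmetric positive definite for all q, let H₂(x₂) ≥ (γ²/2)|x₂|², and let |C₂(x₂)| ≤ μ̄|x₂| where 0 < μ̄ < √η γ. Then W(q, p, x₂) = V(q) + (1/2)pᵀM(q)⁻¹p + H₂(x₂) - qᵀC₂(x₂) is positive definite in (q, p, x₂): W(0,0,0) = 0 and W > 0 elsewhere. -/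
open Matrix

private lemma key_quad (η γ μ : ℝ) (hη : 0 < η) (hγ : 0 < γ) (hμ : 0 < μ)
    (hμ2 : μ ^ 2 < η * γ ^ 2) (a b : ℝ) (ha : 0 ≤ a) (hb : 0 ≤ b)
    (hab : ¬(a = 0 ∧ b = 0)) :
    μ * b * a < (η / 2) * a ^ 2 + (γ ^ 2 / 2) * b ^ 2 := by
  rcases eq_or_lt_of_le ha with ha0 | ha0
  · have hb0 : 0 < b := lt_of_le_of_ne hb (fun h => hab ⟨ha0.symm, h.symm⟩)
    rw [← ha0]
    nlinarith [mul_pos (mul_pos hγ hγ) (mul_pos hb0 hb0)]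
  rcases eq_or_lt_of_le hb with hb0 | hb0
  · rw [← hb0]
    nlinarith [mul_pos hη (mul_pos ha0 ha0)]
  · nlinarith [sq_nonneg (Real.sqrt η * a - γ * b), Real.sq_sqrt hη.le,
      mul_pos (mul_pos ha0 hb0) (sub_pos.mpr (lt_of_pow_lt_pow_left₀ 2 (mul_nonneg (Real.sqrt_nonneg η) hγ.le) (by nlinarith [Real.sq_sqrt hη.le] : μ ^ 2 < (Real.sqrt η * γ) ^ 2)))]

theorem stmt_13 (n m : ℕ) (η γ μ : ℝ) (hη : 0 < η) (hγ : 0 < γ)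
    (hμ : 0 < μ) (hcond : μ < Real.sqrt η * γ)
    (V : EuclideanSpace ℝ (Fin n) → ℝ) (hV0 : V 0 = 0)
    (hVlb : ∀ q, V q ≥ (η / 2) * ‖q‖ ^ 2)
    (M : EuclideanSpace ℝ (Fin n) → Matrix (Fin n) (Fin n) ℝ)
    (hM : ∀ q, (M q).PosDef)
    (H₂ : EuclideanSpace ℝ (Fin m) → ℝ) (hH₂0 : H₂ 0 = 0)
    (hH₂lb : ∀ x₂, H₂ x₂ ≥ (γ ^ 2 / 2) * ‖x₂‖ ^ 2)
    (C₂ : EuclideanSpace ℝ (Fin m) → EuclideanSpace ℝ (Fin n))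
    (hC₂0 : C₂ 0 = 0) (hC₂lip : ∀ x₂, ‖C₂ x₂‖ ≤ μ * ‖x₂‖)
    (W : EuclideanSpace ℝ (Fin n) → EuclideanSpace ℝ (Fin n) →
      EuclideanSpace ℝ (Fin m) → ℝ)
    (hW : W = fun q p x₂ =>
      V q + (1 / 2 : ℝ) * ((WithLp.ofLp p : Fin n → ℝ) ⬝ᵥ ((M q)⁻¹ *ᵥ (WithLp.ofLp p : Fin n → ℝ)))
        + H₂ x₂ - (inner ℝ q (C₂ x₂) : ℝ)) :
    W 0 0 0 = 0 ∧ ∀ q p x₂, (q, p, x₂) ≠ (0, 0, 0) → 0 < W q p x₂ := by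
  subst hW
  have hμ2 : μ ^ 2 < η * γ ^ 2 := by
    have := Real.sq_sqrt hη.le
    nlinarith [Real.sqrt_nonneg η, hcond, mul_pos hμ hγ]
  constructor
  · simp [hC₂0, hV0, hH₂0]
  · intro q p x₂ hne
    have hinv := (hM q).inv
    -- quadratic form nonneg / pos
    have hquad_nonneg : 0 ≤ (WithLp.ofLp p : Fin n → ℝ) ⬝ᵥ ((M q)⁻¹ *ᵥ (WithLp.ofLp p : Fin n → ℝ)) := by
      have := hinv.posSemidef.dotProduct_mulVec_nonneg (WithLp.ofLp p : Fin n → ℝ)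
      simpa using this
    have hinner : (inner ℝ q (C₂ x₂) : ℝ) ≤ μ * ‖x₂‖ * ‖q‖ := by
      calc (inner ℝ q (C₂ x₂) : ℝ) ≤ ‖q‖ * ‖C₂ x₂‖ := real_inner_le_norm _ _
        _ ≤ ‖q‖ * (μ * ‖x₂‖) := by
            exact mul_le_mul_of_nonneg_left (hC₂lip x₂) (norm_nonneg _)
        _ = μ * ‖x₂‖ * ‖q‖ := by ring
    by_cases hq : q = 0 ∧ x₂ = 0
    · obtain ⟨hq0, hx0⟩ := hq
      subst hq0; subst hx0
      have hp : p ≠ 0 := by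
        rintro rfl; exact hne rfl
      have hp' : (WithLp.ofLp p : Fin n → ℝ) ≠ 0 := fun h => hp (by
        ext i; exact congrFun h i)
      have hpos := hinv.dotProduct_mulVec_pos (x := (WithLp.ofLp p : Fin n → ℝ)) hp'
      simp only [star_trivial] at hpos
      simp only [hV0, hH₂0, hC₂0, inner_zero_right]
      nlinarith [hpos]
    · have hor : q ≠ 0 ∨ x₂ ≠ 0 := by tauto
      have hVq := hVlb q
      have hHx := hH₂lb x₂
      have hkey : μ * ‖x₂‖ * ‖q‖ < (η / 2) * ‖q‖ ^ 2 + (γ ^ 2 / 2) * ‖x₂‖ ^ 2 := by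
        have hab : ¬(‖q‖ = 0 ∧ ‖x₂‖ = 0) := by
          rcases hor with h | h
          · exact fun hc => h (norm_eq_zero.mp hc.1)
          · exact fun hc => h (norm_eq_zero.mp hc.2)
        exact key_quad η γ μ hη hγ hμ hμ2 ‖q‖ ‖x₂‖ (norm_nonneg _) (norm_nonneg _) hab
      have := hinner
      dsimp only
      nlinarith [hVq, hHx, hquad_nonneg]
end

section
/- For a linear time-invariant system ẋ = (J - R)(Px - Cᵀu), y = Cx, with J skew-symmetric, R symmetric positive semidefinite, P symmetric positive definite, and C ∈ ℝ^{p×n}, the storage function V(x) = (1/2)xᵀPx satisfies V̇ ≤ uᵀẏ along all trajectories; i.e., the system is negative imaginary. -/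
open Matrix

lemma hasDerivAt_mulVec {n m : ℕ} (M : Matrix (Fin m) (Fin n) ℝ)
    (x : ℝ → Fin n → ℝ) (x' : Fin n → ℝ) (t : ℝ) (hx : HasDerivAt x x' t) :
    HasDerivAt (fun s => M *ᵥ x s) (M *ᵥ x') t := by
  rw [hasDerivAt_pi] at hx ⊢
  intro i
  simp only [Matrix.mulVec, dotProduct]
  exact HasDerivAt.fun_sum fun j _ => (hx j).const_mul (M i j)

lemma hasDerivAt_dot {n : ℕ} (f g : ℝ → Fin n → ℝ) (f' g' : Fin n → ℝ) (t : ℝ)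
    (hf : HasDerivAt f f' t) (hg : HasDerivAt g g' t) :
    HasDerivAt (fun s => f s ⬝ᵥ g s) (f' ⬝ᵥ g t + f t ⬝ᵥ g') t := by
  rw [hasDerivAt_pi] at hf hg
  simp only [dotProduct, ← Finset.sum_add_distrib]
  exact HasDerivAt.fun_sum fun j _ => (hf j).mul (hg j)

theorem stmt_17 (n p : ℕ)
    (J R P : Matrix (Fin n) (Fin n) ℝ) (C : Matrix (Fin p) (Fin n) ℝ)
    (hJ : Jᵀ = -J) (hR : R.PosSemidef) (hP : P.PosDef)
    (x : ℝ → Fin n → ℝ) (u : ℝ → Fin p → ℝ)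
    (hode : ∀ t, HasDerivAt x ((J - R) *ᵥ (P *ᵥ x t - Cᵀ *ᵥ u t)) t) :
    ∀ t, deriv (fun s => (1 / 2 : ℝ) * (x s ⬝ᵥ (P *ᵥ x s))) t ≤
      u t ⬝ᵥ deriv (fun s => C *ᵥ x s) t := by
  intro t
  set v : Fin n → ℝ := P *ᵥ x t - Cᵀ *ᵥ u t with hv
  set x' : Fin n → ℝ := (J - R) *ᵥ v with hx'
  have hx : HasDerivAt x x' t := hode t
  have hV : HasDerivAt (fun s => (1 / 2 : ℝ) * (x s ⬝ᵥ (P *ᵥ x s)))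
      ((1 / 2 : ℝ) * (x' ⬝ᵥ (P *ᵥ x t) + x t ⬝ᵥ (P *ᵥ x'))) t :=
    (hasDerivAt_dot x (fun s => P *ᵥ x s) x' (P *ᵥ x') t hx
      (hasDerivAt_mulVec P x x' t hx)).const_mul _
  have hy : HasDerivAt (fun s => C *ᵥ x s) (C *ᵥ x') t :=
    hasDerivAt_mulVec C x x' t hx
  rw [hV.deriv, hy.deriv]
  have hPt : Pᵀ = P := by simpa [Matrix.IsSymm] using hP.isHermitian
  have hPsymm : x' ⬝ᵥ (P *ᵥ x t) = x t ⬝ᵥ (P *ᵥ x') := by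
    rw [Matrix.dotProduct_mulVec, ← Matrix.mulVec_transpose, hPt,
      dotProduct_comm]
  have hu : u t ⬝ᵥ (C *ᵥ x') = (Cᵀ *ᵥ u t) ⬝ᵥ x' := by
    rw [Matrix.dotProduct_mulVec, ← Matrix.mulVec_transpose]
  have key : u t ⬝ᵥ (C *ᵥ x') - (1 / 2 : ℝ) * (x' ⬝ᵥ (P *ᵥ x t) + x t ⬝ᵥ (P *ᵥ x'))
      = v ⬝ᵥ (R *ᵥ v) - v ⬝ᵥ (J *ᵥ v) := by
    rw [hPsymm, hu]
    have hxp : x t ⬝ᵥ (P *ᵥ x') = (P *ᵥ x t) ⬝ᵥ x' := by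
      rw [Matrix.dotProduct_mulVec, ← Matrix.mulVec_transpose, hPt]
    rw [hxp]
    have : (Cᵀ *ᵥ u t) ⬝ᵥ x' - (P *ᵥ x t) ⬝ᵥ x' = -(v ⬝ᵥ x') := by
      rw [hv, sub_dotProduct]; ring
    have h2 : v ⬝ᵥ x' = v ⬝ᵥ (J *ᵥ v) - v ⬝ᵥ (R *ᵥ v) := by
      rw [hx', Matrix.sub_mulVec, dotProduct_sub]
    calc (Cᵀ *ᵥ u t) ⬝ᵥ x' - 1 / 2 * ((P *ᵥ x t) ⬝ᵥ x' + (P *ᵥ x t) ⬝ᵥ x')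
        = (Cᵀ *ᵥ u t) ⬝ᵥ x' - (P *ᵥ x t) ⬝ᵥ x' := by ring
      _ = -(v ⬝ᵥ x') := this
      _ = v ⬝ᵥ (R *ᵥ v) - v ⬝ᵥ (J *ᵥ v) := by rw [h2]; ring
  have hJ0 : v ⬝ᵥ (J *ᵥ v) = 0 := by
    have : v ⬝ᵥ (J *ᵥ v) = -(v ⬝ᵥ (J *ᵥ v)) := by
      conv_lhs => rw [Matrix.dotProduct_mulVec, ← Matrix.mulVec_transpose, hJ,
        Matrix.neg_mulVec, neg_dotProduct, dotProduct_comm]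
    linarith
  have hR0 : 0 ≤ v ⬝ᵥ (R *ᵥ v) := by simpa using hR.dotProduct_mulVec_nonneg v
  linarith [key]
end
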